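/- Let T be a triangulated category and X →f Y →g Z →h ΣX a triangle. Then this triangle is distinguished if and only if (1) for every object A the sequence T(A,Σ⁻¹Z) → T(A,X) → T(A,Y) → T(A,Z) → T(A,ΣX) induced by Σ⁻¹h, f, g, h is exact, and (2) the three-fold Toda bracket ⟨h, g, f⟩ ⊆ T(ΣX, ΣX) contains the identity 1_{ΣX}. -/

import Mathlib

open CategoryTheory Category Limits Pretriangulated

variable {C : Type*} [Category C] [Preadditive C] [HasZeroObject C]
  [HasShift C ℤ] [∀ n : ℤ, (shiftFunctor C n).Additive] [Pretriangulated C]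

/-- The fiber-cofiber Toda bracket `⟨f₃, f₂, f₁⟩_fc`: all composites `β ∘ Σα` where,
for a distinguished triangle `F ⟶ X₁ ⟶ X₂ ⟶ ΣF` (so `F = Σ⁻¹C_{f₂}` and `ΣF = C_{f₂}`),
`α : X₀ ⟶ F` lifts `f₁` and `β : ΣF ⟶ X₃` extends `f₃`. -/
def fcBracket {X₀ X₁ X₂ X₃ : C} (f₁ : X₀ ⟶ X₁) (f₂ : X₁ ⟶ X₂) (f₃ : X₂ ⟶ X₃) :
    Set (X₀⟦(1:ℤ)⟧ ⟶ X₃) :=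
  { ψ | ∃ (F : C) (j : F ⟶ X₁) (q : X₂ ⟶ F⟦(1:ℤ)⟧)
      (_ : Triangle.mk j f₂ q ∈ distTriang C)
      (α : X₀ ⟶ F) (β : F⟦(1:ℤ)⟧ ⟶ X₃),
      α ≫ j = f₁ ∧ q ≫ β = f₃ ∧ ψ = α⟦(1:ℤ)⟧' ≫ β }

/-- The iterated cofiber Toda bracket `⟨f₃, f₂, f₁⟩_cc`. -/
def ccBracket {X₀ X₁ X₂ X₃ : C} (f₁ : X₀ ⟶ X₁) (f₂ : X₁ ⟶ X₂) (f₃ : X₂ ⟶ X₃) :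
    Set (X₀⟦(1:ℤ)⟧ ⟶ X₃) :=
  { ψ | ∃ (Cf : C) (q : X₁ ⟶ Cf) (ι : Cf ⟶ X₀⟦(1:ℤ)⟧)
      (_ : Triangle.mk f₁ q ι ∈ distTriang C)
      (φ : Cf ⟶ X₂), q ≫ φ = f₂ ∧ φ ≫ f₃ = ι ≫ ψ }

/-- The iterated fiber Toda bracket `⟨f₃, f₂, f₁⟩_ff`. -/
def ffBracket {X₀ X₁ X₂ X₃ : C} (f₁ : X₀ ⟶ X₁) (f₂ : X₁ ⟶ X₂) (f₃ : X₂ ⟶ X₃) :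
    Set (X₀⟦(1:ℤ)⟧ ⟶ X₃) :=
  { ψ | ∃ (G : C) (j : X₃⟦(-1:ℤ)⟧ ⟶ G) (κ : G ⟶ X₂)
      (_ : Triangle.mk j κ
        (f₃ ≫ (shiftFunctorCompIsoId C (-1:ℤ) (1:ℤ) (neg_add_cancel 1)).inv.app X₃) ∈
          distTriang C)
      (γ : X₁ ⟶ G) (δ : X₀ ⟶ X₃⟦(-1:ℤ)⟧),
      γ ≫ κ = f₂ ∧ f₁ ≫ γ = δ ≫ j ∧
      ψ = δ⟦(1:ℤ)⟧' ≫ (shiftFunctorCompIsoId C (-1:ℤ) (1:ℤ) (neg_add_cancel 1)).hom.app X₃ }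

/-- Heller's criterion: a triangle `X →f Y →g Z →h ΣX` is distinguished if and only if
(1) for every object `A` the sequence
`T(A, Σ⁻¹Z) → T(A, X) → T(A, Y) → T(A, Z) → T(A, ΣX)` is exact, and
(2) the Toda bracket `⟨h, g, f⟩ ⊆ T(ΣX, ΣX)` contains the identity of `ΣX`. -/
theorem distinguished_iff_exact_and_id_mem_todaBracket {X Y Z : C}
    (f : X ⟶ Y) (g : Y ⟶ Z) (h : Z ⟶ X⟦(1:ℤ)⟧) :
    (Triangle.mk f g h ∈ distTriang C) ↔
      ((∀ A : C,
        (∀ u : A ⟶ X, u ≫ f = 0 ↔ ∃ v : A ⟶ Z⟦(-1:ℤ)⟧,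
          v ≫ (h⟦(-1:ℤ)⟧' ≫
            (shiftFunctorCompIsoId C (1:ℤ) (-1:ℤ) (add_neg_cancel 1)).hom.app X) = u) ∧
        (∀ u : A ⟶ Y, u ≫ g = 0 ↔ ∃ v : A ⟶ X, v ≫ f = u) ∧
        (∀ u : A ⟶ Z, u ≫ h = 0 ↔ ∃ v : A ⟶ Y, v ≫ g = u)) ∧
      𝟙 (X⟦(1:ℤ)⟧) ∈ ccBracket f g h) := by
  simp only [ccBracket, Set.mem_setOf_eq]
  constructor
  · intro hT
    constructor
    · intro A
      refine ⟨fun u => ⟨fun hu => ?_, ?_⟩, fun u => ⟨fun hu => ?_, ?_⟩,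
        fun u => ⟨fun hu => ?_, ?_⟩⟩
      · obtain ⟨v, hv⟩ := Triangle.coyoneda_exact₂ _ (inv_rot_of_distTriang _ hT) u
          (by dsimp [Triangle.invRotate]; exact hu)
        refine ⟨-v, ?_⟩
        dsimp [Triangle.invRotate] at hv
        exact ((Preadditive.neg_comp v _).trans (Preadditive.comp_neg v _).symm).trans hv.symm
      · rintro ⟨v, rfl⟩
        have key := comp_distTriang_mor_zero₁₂ _ (inv_rot_of_distTriang _ hT)
        dsimp only [Triangle.invRotate, Triangle.mk] at key
        simp only [Preadditive.neg_comp, assoc, neg_eq_zero] at key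
        have k3 : (h⟦(-1:ℤ)⟧' ≫ (shiftFunctorCompIsoId C (1:ℤ) (-1:ℤ) (add_neg_cancel 1)).hom.app X) ≫ f = 0 :=
          neg_eq_zero.mp (by
            rw [← Preadditive.neg_comp]; exact comp_distTriang_mor_zero₁₂ _ (inv_rot_of_distTriang _ hT))
        rw [assoc, k3]; exact comp_zero
      · obtain ⟨v, hv⟩ := Triangle.coyoneda_exact₂ _ hT u hu
        exact ⟨v, hv.symm⟩
      · rintro ⟨v, rfl⟩
        rw [assoc]
        have := comp_distTriang_mor_zero₁₂ _ hT
        dsimp only [Triangle.mk] at this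
        rw [this]; exact comp_zero
      · obtain ⟨v, hv⟩ := Triangle.coyoneda_exact₃ _ hT u hu
        exact ⟨v, hv.symm⟩
      · rintro ⟨v, rfl⟩
        rw [assoc]
        have := comp_distTriang_mor_zero₂₃ _ hT
        dsimp only [Triangle.mk] at this
        rw [this]; exact comp_zero
    · exact ⟨Z, g, h, hT, 𝟙 Z, by simp, by simp⟩
  · rintro ⟨hex, Cf, q, ι, hdist, φ, hqφ, hφh⟩
    rw [comp_id] at hφh
    -- h ≫ f⟦1⟧' = 0
    have key : (h⟦(-1:ℤ)⟧' ≫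
        (shiftFunctorCompIsoId C (1:ℤ) (-1:ℤ) (add_neg_cancel 1)).hom.app X) ≫ f = 0 :=
      ((hex _).1 _).mpr ⟨𝟙 _, by simp⟩
    have hfz : h ≫ f⟦(1:ℤ)⟧' = 0 := by
      have key2 := congrArg (fun p => p⟦(1:ℤ)⟧') key
      simp only [Functor.map_comp, Functor.map_zero] at key2
      rw [shift_shiftFunctorCompIsoId_add_neg_cancel_hom_app] at key2
      have nat := (shiftFunctorCompIsoId C (-1:ℤ) 1 (neg_add_cancel 1)).hom.naturality h
      dsimp at nat
      rw [← cancel_epi ((shiftFunctorCompIsoId C (-1:ℤ) 1 (neg_add_cancel 1)).hom.app Z)]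
      rw [comp_zero, ← assoc, ← nat]
      simpa using key2
    -- surjectivity of (· ≫ φ)
    have surj : ∀ {A : C} (w : A ⟶ Z), ∃ s : A ⟶ Cf, s ≫ φ = w := by
      intro A w
      obtain ⟨s, hs⟩ := Triangle.coyoneda_exact₁ _ hdist (w ≫ h)
        (by dsimp only [Triangle.mk]; rw [assoc, hfz]; exact comp_zero)
      dsimp only [Triangle.mk] at hs
      change A ⟶ Cf at s
      obtain ⟨v, hv⟩ := ((hex A).2.2 (w - s ≫ φ)).mp
        (by rw [Preadditive.sub_comp, assoc, hφh, ← hs, sub_self])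
      refine ⟨s + v ≫ q, ?_⟩
      rw [Preadditive.add_comp, assoc, hqφ, hv]
      abel
    -- injectivity
    have inj : ∀ {A : C} (s : A ⟶ Cf), s ≫ φ = 0 → s = 0 := by
      intro A s hs
      obtain ⟨v, hv⟩ := Triangle.coyoneda_exact₃ _ hdist s
        (by dsimp only [Triangle.mk]; rw [← hφh, ← assoc, hs]; exact zero_comp)
      dsimp only [Triangle.mk] at hv
      change A ⟶ Y at v
      obtain ⟨u, hu⟩ := ((hex A).2.1 v).mp (by rw [← hqφ, ← assoc, ← hv, hs])
      rw [hv, ← hu, assoc]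
      have := comp_distTriang_mor_zero₁₂ _ hdist
      dsimp only [Triangle.mk] at this
      rw [this]; exact comp_zero
    have : IsIso φ := by
      obtain ⟨ψ, hψ⟩ := surj (𝟙 Z)
      refine ⟨ψ, ?_, hψ⟩
      have := inj (φ ≫ ψ - 𝟙 Cf)
        (by rw [Preadditive.sub_comp, assoc, hψ, comp_id, id_comp, sub_self])
      rwa [sub_eq_zero] at this
    refine isomorphic_distinguished _ hdist _
      (Triangle.isoMk _ _ (Iso.refl _) (Iso.refl _) (asIso φ).symm ?_ ?_ ?_)
    · dsimp; exact (comp_id _).trans (id_comp _).symm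
    · dsimp
      dsimp only [Triangle.mk]
      rw [← hqφ, assoc, IsIso.hom_inv_id, comp_id, id_comp]
    · dsimp
      dsimp only [Triangle.mk]
      rw [← hφh, IsIso.inv_hom_id_assoc]
      simp
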